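/- Let G = (V, E, W) be a finite directed weighted graph in which every directed cycle has strictly positive weight, and let p(v) = max(0, max_u (−d(u,v))) where d is shortest-path distance. If p(b_ℓ) > 0 and b₀ is a vertex attaining p(b_ℓ) = −d(b₀, b_ℓ), then for every vertex b_i on a shortest path from b₀ to b_ℓ, p(b_i) = −d(b₀, b_i); in particular p(b₀) = 0. -/
import Mathlib

/-- Shortest-path distance from `u` to `v` in the directed graph with edge relation `E` and
edge weights `W`: the infimum (in `EReal`) of the total weights of all walks from `u` to `v`
(`+∞` if `v` is unreachable from `u`). -/
noncomputable def gdist {V : Type*} (E : V → V → Prop) (W : V → V → ℝ) (u v : V) : EReal :=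
  ⨅ (ℓ : ℕ) (c : Fin (ℓ + 1) → V) (_ : c 0 = u) (_ : c (Fin.last ℓ) = v)
      (_ : ∀ j : Fin ℓ, E (c j.castSucc) (c j.succ)),
    (((∑ j : Fin ℓ, W (c j.castSucc) (c j.succ)) : ℝ) : EReal)

/-- The prices computed by the Find-Prices algorithm:
`p v = max (0, max over sources u of (- d(u, v)))`. -/
noncomputable def findPrice {V : Type*} [Fintype V] (E : V → V → Prop) (W : V → V → ℝ)
    (v : V) : ℝ :=
  (⨆ u : V, max 0 (-(gdist E W u v))).toReal

/-- A directed cycle (with wraparound via `Fin` addition). -/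
def IsCycle {V : Type*} (E : V → V → Prop) {ℓ : ℕ} (c : Fin (ℓ + 1) → V) : Prop :=
  ∀ j : Fin (ℓ + 1), E (c j) (c (j + 1))

/-- The total weight of a directed cycle. -/
def cycleWeight {V : Type*} (W : V → V → ℝ) {ℓ : ℕ} (c : Fin (ℓ + 1) → V) : ℝ :=
  ∑ j : Fin (ℓ + 1), W (c j) (c (j + 1))

/-- `gdist` is bounded above by the weight of any concrete walk, phrased with `ℕ`-indexed
walks for convenience. -/
lemma gdist_le_nat {V : Type*} (E : V → V → Prop) (W : V → V → ℝ) {u v : V} {m : ℕ}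
    (f : ℕ → V) (h0 : f 0 = u) (hl : f m = v) (hE : ∀ k < m, E (f k) (f (k + 1))) :
    gdist E W u v ≤ (((∑ k ∈ Finset.range m, W (f k) (f (k + 1))) : ℝ) : EReal) := by
  have hsum : (∑ j : Fin m, W ((fun j : Fin (m + 1) => f j) j.castSucc)
      ((fun j : Fin (m + 1) => f j) j.succ)) = ∑ k ∈ Finset.range m, W (f k) (f (k + 1)) := by
    rw [← Fin.sum_univ_eq_sum_range (fun k => W (f k) (f (k + 1))) m]
    simp [Fin.coe_castSucc, Fin.val_succ]
  rw [← hsum]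
  unfold gdist
  refine iInf_le_of_le m (iInf_le_of_le (fun j : Fin (m + 1) => f j) ?_)
  refine iInf_le_of_le (by simpa using h0) ?_
  refine iInf_le_of_le (by simpa using hl) ?_
  exact iInf_le _ (fun j => by simpa using hE j j.isLt)

lemma gdist_self_nonpos {V : Type*} (E : V → V → Prop) (W : V → V → ℝ) (v : V) :
    gdist E W v v ≤ 0 := by
  have := gdist_le_nat E W (u := v) (v := v) (m := 0) (fun _ => v) rfl rfl
    (fun k hk => absurd hk (Nat.not_lt_zero k))
  simpa using this

/-- Concatenation of two walks bounds `gdist`. -/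
lemma gdist_concat {V : Type*} (E : V → V → Prop) (W : V → V → ℝ) {u w v : V} {m n : ℕ}
    (f g : ℕ → V) (hf0 : f 0 = u) (hfm : f m = w) (hg0 : g 0 = w) (hgn : g n = v)
    (hEf : ∀ k < m, E (f k) (f (k + 1))) (hEg : ∀ k < n, E (g k) (g (k + 1))) :
    gdist E W u v ≤ (((∑ k ∈ Finset.range m, W (f k) (f (k + 1)) +
      ∑ k ∈ Finset.range n, W (g k) (g (k + 1))) : ℝ) : EReal) := by
  classical
  set h : ℕ → V := fun k => if k < m then f k else g (k - m) with hhdef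
  have hfk : ∀ k ≤ m, h k = f k := by
    intro k hk
    by_cases h' : k < m
    · simp only [hhdef, if_pos h']
    · have hkm : k = m := by omega
      subst hkm
      simp only [hhdef, if_neg h', Nat.sub_self]
      rw [hg0, hfm]
  have hgk : ∀ k, h (m + k) = g k := by
    intro k
    have h1 : ¬ (m + k < m) := by omega
    simp only [hhdef, if_neg h1, Nat.add_sub_cancel_left]
  have hsum : ∑ k ∈ Finset.range (m + n), W (h k) (h (k + 1)) =
      ∑ k ∈ Finset.range m, W (f k) (f (k + 1)) +
      ∑ k ∈ Finset.range n, W (g k) (g (k + 1)) := by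
    rw [Finset.sum_range_add]
    congr 1
    · refine Finset.sum_congr rfl fun k hk => ?_
      rw [Finset.mem_range] at hk
      rw [hfk k hk.le, hfk (k + 1) hk]
    · refine Finset.sum_congr rfl fun k _ => ?_
      rw [hgk k, show m + k + 1 = m + (k + 1) by omega, hgk (k + 1)]
  have hhe : ∀ k < m + n, E (h k) (h (k + 1)) := by
    intro k hk
    by_cases hkm : k < m
    · rw [hfk k hkm.le, hfk (k + 1) hkm]
      exact hEf k hkm
    · push_neg at hkm
      obtain ⟨j, rfl⟩ : ∃ j, k = m + j := ⟨k - m, by omega⟩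
      rw [hgk j, show m + j + 1 = m + (j + 1) by omega, hgk (j + 1)]
      exact hEg j (by omega)
  have h0 : h 0 = u := by rw [hfk 0 (Nat.zero_le m), hf0]
  have hl : h (m + n) = v := by rw [hgk n, hgn]
  have := gdist_le_nat E W h h0 hl hhe
  rwa [hsum] at this

/-- Converting a `Fin`-indexed walk to a `ℕ`-indexed one. -/
lemma fin_walk_nat {V : Type*} (W : V → V → ℝ) {m : ℕ} (cw : Fin (m + 1) → V) :
    ∃ fw : ℕ → V, (∀ k (h : k < m + 1), fw k = cw ⟨k, h⟩) ∧
      ∑ k ∈ Finset.range m, W (fw k) (fw (k + 1)) =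
        ∑ j : Fin m, W (cw j.castSucc) (cw j.succ) := by
  refine ⟨fun k => cw ⟨min k m, by omega⟩, ?_, ?_⟩
  · intro k h
    exact congrArg cw (Fin.ext (Nat.min_eq_left (by omega)))
  · rw [← Fin.sum_univ_eq_sum_range
      (fun k => W (cw ⟨min k m, by omega⟩) (cw ⟨min (k + 1) m, by omega⟩)) m]
    refine Finset.sum_congr rfl fun j _ => ?_
    congr 1
    · exact congrArg cw (Fin.ext (by
        simp only [Fin.coe_castSucc]
        exact Nat.min_eq_left j.isLt.le))
    · exact congrArg cw (Fin.ext (by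
        simp only [Fin.val_succ]
        exact Nat.min_eq_left j.isLt))

/-- Setting of the Find-Prices algorithm: all directed cycles strictly positive,
`p(v) = max (0, max_u (−d(u,v)))`.  If `p(b_ℓ) > 0` and `b₀` attains `p(b_ℓ) = −d(b₀, b_ℓ)`,
then for every vertex `b_i` on a shortest path from `b₀` to `b_ℓ` we have
`p(b_i) = −d(b₀, b_i)`; in particular `p(b₀) = 0`. -/
theorem stmt_3 {V : Type*} [Fintype V] [Nonempty V] (E : V → V → Prop) (W : V → V → ℝ)
    (hpos : ∀ (ℓ : ℕ) (c : Fin (ℓ + 1) → V), IsCycle E c → 0 < cycleWeight W c)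
    (b₀ bl : V)
    (hppos : 0 < findPrice E W bl)
    (hatt : (findPrice E W bl : EReal) = -(gdist E W b₀ bl))
    (ℓ : ℕ) (c : Fin (ℓ + 1) → V)
    (hc0 : c 0 = b₀) (hcl : c (Fin.last ℓ) = bl)
    (hcE : ∀ j : Fin ℓ, E (c j.castSucc) (c j.succ))
    (hshort : (((∑ j : Fin ℓ, W (c j.castSucc) (c j.succ)) : ℝ) : EReal) = gdist E W b₀ bl) :
    (∀ i : Fin (ℓ + 1), (findPrice E W (c i) : EReal) = -(gdist E W b₀ (c i))) ∧
      findPrice E W b₀ = 0 := by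
  classical
  obtain ⟨f, hf, hfsum⟩ := fin_walk_nat W c
  set T : ℝ := ∑ j : Fin ℓ, W (c j.castSucc) (c j.succ) with hT
  have hedge : ∀ k < ℓ, E (f k) (f (k + 1)) := by
    intro k hk
    rw [hf k (by omega), hf (k + 1) (by omega)]
    exact hcE ⟨k, hk⟩
  set P : Fin (ℓ + 1) → ℝ := fun i => ∑ k ∈ Finset.range i.val, W (f k) (f (k + 1)) with hP
  set S : Fin (ℓ + 1) → ℝ :=
    fun i => ∑ k ∈ Finset.range (ℓ - i.val), W (f (i.val + k)) (f (i.val + k + 1)) with hS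
  have hPS : ∀ i : Fin (ℓ + 1), P i + S i = T := by
    intro i
    rw [← hfsum, show ℓ = i.val + (ℓ - i.val) by omega, Finset.sum_range_add]
  -- the vertices on the path, in ℕ-form
  have hfc : ∀ i : Fin (ℓ + 1), f i.val = c i := by
    intro i
    rw [hf i.val i.isLt]
  have hf0 : f 0 = b₀ := by
    rw [hf 0 (by omega), ← hc0]
    exact congrArg c (Fin.ext (by simp))
  have hfℓ : f ℓ = bl := by
    rw [hf ℓ (by omega), ← hcl]
    rfl
  -- prefix walk
  have hPwalk : ∀ i : Fin (ℓ + 1), gdist E W b₀ (c i) ≤ ((P i : ℝ) : EReal) :=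
    fun i => gdist_le_nat E W f hf0 (hfc i) (fun k hk => hedge k (by omega))
  -- the supremum at bl
  have hne_top : (⨆ u : V, max 0 (-(gdist E W u bl))) ≠ ⊤ := by
    intro h
    rw [findPrice, h, EReal.toReal_top] at hppos
    exact lt_irrefl 0 hppos
  have hge0 : (0 : EReal) ≤ ⨆ u : V, max 0 (-(gdist E W u bl)) :=
    le_trans (le_max_left _ _) (le_iSup (fun u => max 0 (-(gdist E W u bl)))
      (Classical.arbitrary V))
  have hne_bot : (⨆ u : V, max 0 (-(gdist E W u bl))) ≠ ⊥ := by
    intro h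
    rw [h] at hge0
    simp at hge0
  have hcoe : ((findPrice E W bl : ℝ) : EReal) = ⨆ u : V, max 0 (-(gdist E W u bl)) :=
    EReal.coe_toReal hne_top hne_bot
  have hsup_eq : (⨆ u : V, max 0 (-(gdist E W u bl))) = -((T : ℝ) : EReal) := by
    rw [← hcoe, hatt, ← hshort]
  have hDul : ∀ u, ((T : ℝ) : EReal) ≤ gdist E W u bl := by
    intro u
    have h1 : -(gdist E W u bl) ≤ ⨆ u : V, max 0 (-(gdist E W u bl)) :=
      le_trans (le_max_right _ _) (le_iSup (fun u => max 0 (-(gdist E W u bl))) u)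
    rw [hsup_eq] at h1
    exact EReal.neg_le_neg_iff.mp h1
  -- lower bound on gdist u (c i)
  have hlow : ∀ i : Fin (ℓ + 1), ∀ u, ((P i : ℝ) : EReal) ≤ gdist E W u (c i) := by
    intro i u
    unfold gdist
    refine le_iInf fun m => le_iInf fun cw => le_iInf fun h0 => le_iInf fun hl =>
      le_iInf fun hE => ?_
    obtain ⟨fw, hfw, hfwsum⟩ := fin_walk_nat W cw
    have hfw0 : fw 0 = u := by
      rw [hfw 0 (by omega), ← h0]
      exact congrArg cw (Fin.ext (by simp))
    have hfwm : fw m = c i := by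
      rw [hfw m (by omega), ← hl]
      rfl
    have hfwE : ∀ k < m, E (fw k) (fw (k + 1)) := by
      intro k hk
      rw [hfw k (by omega), hfw (k + 1) (by omega)]
      exact hE ⟨k, hk⟩
    -- suffix walk from c i to bl
    have hg0 : f (i.val + 0) = c i := by rw [Nat.add_zero, hfc i]
    have hgn : f (i.val + (ℓ - i.val)) = bl := by
      rw [show i.val + (ℓ - i.val) = ℓ by omega, hfℓ]
    have hconcat := gdist_concat E W fw (fun k => f (i.val + k)) hfw0 hfwm hg0 hgn hfwE
      (fun k hk => by
        show E (f (i.val + k)) (f (i.val + (k + 1)))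
        rw [show i.val + (k + 1) = i.val + k + 1 by omega]
        exact hedge (i.val + k) (by omega))
    have hsum2 : ∑ k ∈ Finset.range (ℓ - i.val),
        W ((fun k => f (i.val + k)) k) ((fun k => f (i.val + k)) (k + 1)) = S i := by
      simp only [hS]
      exact Finset.sum_congr rfl fun k _ => by
        show W (f (i.val + k)) (f (i.val + (k + 1))) = _
        rw [show i.val + (k + 1) = i.val + k + 1 by omega]
    rw [hsum2] at hconcat
    have h2 := le_trans (hDul u) hconcat
    rw [EReal.coe_le_coe_iff] at h2
    have h3 : P i ≤ ∑ k ∈ Finset.range m, W (fw k) (fw (k + 1)) := by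
      have hps := hPS i
      linarith [h2, hps]
    rw [hfwsum] at h3
    exact EReal.coe_le_coe_iff.mpr h3
  have hDP : ∀ i : Fin (ℓ + 1), gdist E W b₀ (c i) = ((P i : ℝ) : EReal) :=
    fun i => le_antisymm (hPwalk i) (hlow i b₀)
  have hPle0 : ∀ i : Fin (ℓ + 1), P i ≤ 0 := by
    intro i
    have h1 := (hlow i (c i)).trans (gdist_self_nonpos E W (c i))
    exact_mod_cast h1
  have hmain : ∀ i : Fin (ℓ + 1), (findPrice E W (c i) : EReal) = -(gdist E W b₀ (c i)) := by
    intro i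
    have hsupi : (⨆ u : V, max 0 (-(gdist E W u (c i)))) = (((-(P i)) : ℝ) : EReal) := by
      apply le_antisymm
      · refine iSup_le fun u => max_le ?_ ?_
        · exact_mod_cast neg_nonneg.mpr (hPle0 i)
        · rw [EReal.coe_neg]
          exact EReal.neg_le_neg_iff.mpr (hlow i u)
      · refine le_trans ?_ (le_iSup (fun u => max 0 (-(gdist E W u (c i)))) b₀)
        rw [hDP i, ← EReal.coe_neg]
        exact le_max_right _ _
    have hval : findPrice E W (c i) = -(P i) := by
      rw [findPrice, hsupi, EReal.toReal_coe]
    rw [hval, hDP i, ← EReal.coe_neg]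
  refine ⟨hmain, ?_⟩
  have h0 := hmain 0
  have hP0 : P 0 = 0 := by simp [hP]
  rw [hDP 0, hP0, hc0] at h0
  rw [EReal.coe_zero, neg_zero] at h0
  exact_mod_cast h0
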